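/- arXiv:1801.02010 — 2 statements merged into one kernel-verified Lean document; each statement's English description precedes it below -/
import Mathlib

section
/- Let A ∈ F_q^{n×n} and C ∈ F_q^{k×k}. Suppose there exists a nonzero column vector v ∈ F_q^n with Av = 0 and a nonzero row vector w ∈ F_q^k with wC = 0. Then there exists a nonzero codeword B ∈ R(A,C) whose Hamming weight equals wt(v)·wt(w); consequently the minimum distance of the intertwining code R(A,C) (the least Hamming weight of a nonzero codeword) is at most wt(v)·wt(w). -/
/-- Hamming weight of an `n × k` matrix: the number of nonzero entries. -/
def matrixWt {F : Type*} [Field F] [DecidableEq F] {n k : ℕ}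
    (B : Matrix (Fin n) (Fin k) F) : ℕ :=
  (Finset.univ.filter fun p : Fin n × Fin k => B p.1 p.2 ≠ 0).card

/-- If `v ≠ 0` with `A·v = 0` and `w ≠ 0` with `w·C = 0`, then
there is a nonzero codeword `B ∈ R(A,C)` of Hamming weight `wt(v)·wt(w)`;
consequently the minimum distance of `R(A,C)` (the least weight of a nonzero
codeword) is at most `wt(v)·wt(w)`. -/
theorem intertwining_min_distance_le_outer_weight
    (F : Type*) [Field F] [DecidableEq F] (n k : ℕ)
    (A : Matrix (Fin n) (Fin n) F) (C : Matrix (Fin k) (Fin k) F)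
    (v : Fin n → F) (w : Fin k → F) (hv0 : v ≠ 0) (hw0 : w ≠ 0)
    (hv : A.mulVec v = 0) (hw : Matrix.vecMul w C = 0) :
    (∃ B : Matrix (Fin n) (Fin k) F,
        B ≠ 0 ∧ A * B = B * C ∧ matrixWt B = hammingNorm v * hammingNorm w) ∧
    sInf {m : ℕ | ∃ B : Matrix (Fin n) (Fin k) F,
        B ≠ 0 ∧ A * B = B * C ∧ matrixWt B = m} ≤
      hammingNorm v * hammingNorm w := by
  set B : Matrix (Fin n) (Fin k) F := Matrix.of fun i j => v i * w j with hB
  have hAB : A * B = 0 := by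
    ext i j
    have := congrFun hv i
    simp only [Matrix.mul_apply, hB, Matrix.of_apply, Matrix.zero_apply]
    calc ∑ l, A i l * (v l * w j) = (∑ l, A i l * v l) * w j := by
          rw [Finset.sum_mul]; exact Finset.sum_congr rfl fun _ _ => by ring
      _ = 0 := by
          simp [Matrix.mulVec, dotProduct] at this
          rw [this]; ring
  have hBC : B * C = 0 := by
    ext i j
    have := congrFun hw j
    simp only [Matrix.mul_apply, hB, Matrix.of_apply, Matrix.zero_apply,
      mul_assoc, ← Finset.mul_sum]
    simp [Matrix.vecMul, dotProduct] at this
    rw [this]; ring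
  -- pick indices where v, w are nonzero
  obtain ⟨i₀, hi₀⟩ : ∃ i, v i ≠ 0 := by
    by_contra h; push_neg at h; exact hv0 (funext h)
  obtain ⟨j₀, hj₀⟩ : ∃ j, w j ≠ 0 := by
    by_contra h; push_neg at h; exact hw0 (funext h)
  have hBne : B ≠ 0 := by
    intro h
    have : v i₀ * w j₀ = 0 := by
      have := congrFun (congrFun h i₀) j₀
      simpa [hB] using this
    exact (mul_ne_zero hi₀ hj₀) this
  have hwt : matrixWt B = hammingNorm v * hammingNorm w := by
    unfold matrixWt
    rw [hammingNorm, hammingNorm, ← Finset.card_product]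
    congr 1
    ext p
    simp [hB, mul_ne_zero_iff, Finset.mem_filter, Finset.mem_product]
  refine ⟨⟨B, hBne, by rw [hAB, hBC], hwt⟩, ?_⟩
  exact Nat.sInf_le ⟨B, hBne, by rw [hAB, hBC], hwt⟩
end

section
/- Let A ∈ F_q^{n×n} and C ∈ F_q^{k×k}. Suppose A is singular (there exists a nonzero v with Av = 0) and C^T is singular (there exists a nonzero row vector w with wC = 0). Then there exists a nonzero codeword B ∈ R(A,C) whose Hamming weight is at most (rank(A)+1)·(rank(C)+1); in particular the minimum distance of R(A,C) is at most (rank(A)+1)·(rank(C)+1). -/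
/-- If a square matrix is singular, it has a nonzero kernel vector of support
at most `rank + 1`. -/
lemma exists_small_ker {F : Type*} [Field F] [DecidableEq F] {n : ℕ}
    (A : Matrix (Fin n) (Fin n) F)
    (hA : ∃ v : Fin n → F, v ≠ 0 ∧ A.mulVec v = 0) :
    ∃ v : Fin n → F, v ≠ 0 ∧ A.mulVec v = 0 ∧
      (Finset.univ.filter fun i => v i ≠ 0).card ≤ A.rank + 1 := by
  obtain ⟨v0, hv0, hAv0⟩ := hA
  have hker : 0 < Module.finrank F (LinearMap.ker A.mulVecLin) := by
    rw [Module.finrank_pos_iff_exists_ne_zero]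
    exact ⟨⟨v0, by simpa [Matrix.mulVecLin_apply] using hAv0⟩,
      fun h => hv0 (by simpa using congrArg Subtype.val h)⟩
  have hrn : A.rank + 1 ≤ n := by
    have := LinearMap.finrank_range_add_finrank_ker (A.mulVecLin)
    rw [Module.finrank_pi] at this
    simp only [Fintype.card_fin] at this
    have : A.rank + Module.finrank F (LinearMap.ker A.mulVecLin) = n := this
    omega
  set r := A.rank with hr
  let e : Fin (r + 1) → Fin n := Fin.castLE hrn
  have he : Function.Injective e := Fin.castLE_injective hrn
  set W := LinearMap.range A.mulVecLin with hW
  let u : Fin (r + 1) → W := fun j =>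
    ⟨A.mulVec (Pi.single (e j) 1), ⟨Pi.single (e j) 1, by simp [Matrix.mulVecLin_apply]⟩⟩
  have hdep : ¬ LinearIndependent F u := by
    intro hli
    have := hli.fintype_card_le_finrank
    simp only [Fintype.card_fin] at this
    have hWr : Module.finrank F W = r := rfl
    omega
  obtain ⟨g, hg, j0, hj0⟩ := Fintype.not_linearIndependent_iff.mp hdep
  refine ⟨∑ j, g j • (Pi.single (e j) 1 : Fin n → F), ?_, ?_, ?_⟩
  · intro h
    apply hj0
    have := congrFun h (e j0)
    simp only [Finset.sum_apply, Pi.smul_apply, Pi.zero_apply] at this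
    rwa [Finset.sum_eq_single j0 (fun j _ hj => by
        have hne : e j0 ≠ e j := fun h' => hj (he h'.symm)
        simp [Pi.single_apply, hne])
      (fun h => absurd (Finset.mem_univ j0) h), Pi.single_eq_same, smul_eq_mul,
      mul_one] at this
  · have : A.mulVecLin (∑ j, g j • (Pi.single (e j) 1 : Fin n → F)) = 0 := by
      rw [map_sum]
      have := congrArg (Subtype.val) hg
      simpa [u, Matrix.mulVecLin_apply] using this
    simpa only [Matrix.mulVecLin_apply] using this
  · have hsub : (Finset.univ.filter fun i =>
          (∑ j, g j • (Pi.single (e j) 1 : Fin n → F)) i ≠ 0) ⊆ Finset.univ.image e := by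
      intro i hi
      simp only [Finset.mem_filter, Finset.mem_univ, true_and] at hi
      by_contra hmem
      apply hi
      simp only [Finset.sum_apply, Pi.smul_apply]
      refine Finset.sum_eq_zero fun j _ => ?_
      have : i ≠ e j := fun h => hmem (Finset.mem_image.mpr ⟨j, Finset.mem_univ j, h.symm⟩)
      simp [Pi.single_apply, this]
    calc _ ≤ (Finset.univ.image e).card := Finset.card_le_card hsub
      _ ≤ (Finset.univ : Finset (Fin (r + 1))).card := Finset.card_image_le
      _ = r + 1 := by simp

/-- If `A` is singular and `Cᵀ` is singular, then there is a
nonzero codeword `B ∈ R(A,C)` of Hamming weight at most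
`(rank(A)+1)·(rank(C)+1)`; in particular the minimum distance of `R(A,C)` is
at most `(rank(A)+1)·(rank(C)+1)`. -/
theorem intertwining_min_distance_rank_bound
    (F : Type*) [Field F] [DecidableEq F] (n k : ℕ)
    (A : Matrix (Fin n) (Fin n) F) (C : Matrix (Fin k) (Fin k) F)
    (hA : ∃ v : Fin n → F, v ≠ 0 ∧ A.mulVec v = 0)
    (hC : ∃ w : Fin k → F, w ≠ 0 ∧ Matrix.vecMul w C = 0) :
    (∃ B : Matrix (Fin n) (Fin k) F,
        B ≠ 0 ∧ A * B = B * C ∧ matrixWt B ≤ (A.rank + 1) * (C.rank + 1)) ∧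
    sInf {m : ℕ | ∃ B : Matrix (Fin n) (Fin k) F,
        B ≠ 0 ∧ A * B = B * C ∧ matrixWt B = m} ≤
      (A.rank + 1) * (C.rank + 1) := by
  obtain ⟨v, hv, hAv, hvcard⟩ := exists_small_ker A hA
  have hC' : ∃ w : Fin k → F, w ≠ 0 ∧ Matrix.mulVec (Matrix.transpose C) w = 0 := by
    obtain ⟨w, hw, hCw⟩ := hC
    exact ⟨w, hw, by rw [Matrix.mulVec_transpose]; exact hCw⟩
  obtain ⟨w, hw, hCw, hwcard⟩ := exists_small_ker (Matrix.transpose C) hC'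
  rw [Matrix.mulVec_transpose] at hCw
  rw [Matrix.rank_transpose] at hwcard
  set B : Matrix (Fin n) (Fin k) F := fun i j => v i * w j with hB
  obtain ⟨i0, hi0⟩ := Function.ne_iff.mp hv
  obtain ⟨j0, hj0⟩ := Function.ne_iff.mp hw
  have hBne : B ≠ 0 := by
    intro h
    have := congrFun (congrFun h i0) j0
    simp only [hB, Matrix.zero_apply] at this
    exact (mul_ne_zero hi0 hj0) this
  have hAB : A * B = B * C := by
    ext i j
    have h1 : (A * B) i j = (A.mulVec v i) * w j := by
      rw [Matrix.mul_apply]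
      simp [Matrix.mul_apply, Matrix.mulVec, dotProduct, hB, Finset.sum_mul, mul_assoc]
    have h2 : (B * C) i j = v i * (Matrix.vecMul w C) j := by
      rw [Matrix.mul_apply]
      simp [Matrix.mul_apply, Matrix.vecMul, dotProduct, hB, Finset.mul_sum, mul_assoc]
    rw [h1, h2, hAv, hCw]
    simp
  have hwt : matrixWt B ≤ (A.rank + 1) * (C.rank + 1) := by
    have hsub : (Finset.univ.filter fun p : Fin n × Fin k => B p.1 p.2 ≠ 0) ⊆
        (Finset.univ.filter fun i => v i ≠ 0) ×ˢ (Finset.univ.filter fun j => w j ≠ 0) := by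
      intro p hp
      simp only [Finset.mem_filter, Finset.mem_univ, true_and, hB] at hp
      simp only [Finset.mem_product, Finset.mem_filter, Finset.mem_univ, true_and]
      exact ⟨left_ne_zero_of_mul hp, right_ne_zero_of_mul hp⟩
    calc matrixWt B ≤ _ := Finset.card_le_card hsub
      _ = _ := Finset.card_product _ _
      _ ≤ (A.rank + 1) * (C.rank + 1) := Nat.mul_le_mul hvcard hwcard
  exact ⟨⟨B, hBne, hAB, hwt⟩,
    le_trans (Nat.sInf_le ⟨B, hBne, hAB, rfl⟩) hwt⟩
end
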